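/- Let 0 < p ≤ q with p + q ≤ 1, set a = q − p, c = q(1−p) + p(1−q), u₋ = √(q(1−p)) − √(p(1−q)) and u₊ = √(q(1−p)) + √(p(1−q)), and let I₁ = [1 + u₋, 1 + u₊] and I₂ = [1 − u₊, 1 − u₋]. Then the function ρ(x) = (1/π)·√(−a² + 2c(x−1)² − (x−1)⁴) / |x(x−1)(x−2)| satisfies ∫_{I₁∪I₂} ρ(x) dx = 2p. (ρ is the density of the absolutely continuous part of the limiting eigenvalue distribution of the sum of two independent random projections with fractional ranks p and q; its total mass is 2p, complementing the atom of mass q − p at 1 and the atom of mass 1 − p − q at 0.) -/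

import Mathlib

open MeasureTheory
open Real intervalIntegral

lemma poisson_int (m b : ℝ) (hb : 0 < b) (hbm : b < m) :
    ∫ θ in (0:ℝ)..π, 1 / (m - b * Real.cos θ) = π / Real.sqrt (m^2 - b^2) := by
  set r := Real.sqrt (m^2 - b^2) with hr
  have hm : 0 < m := hb.trans hbm
  have hr2 : r^2 = m^2 - b^2 := Real.sq_sqrt (by nlinarith)
  have hrpos : 0 < r := Real.sqrt_pos.2 (by nlinarith)
  have hD : ∀ θ : ℝ, 0 < m + r - b * Real.cos θ := by
    intro θ
    have h1 : b * Real.cos θ ≤ b := by nlinarith [Real.cos_le_one θ]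
    nlinarith
  have hDen : ∀ θ : ℝ, 0 < m - b * Real.cos θ := by
    intro θ
    have h1 : b * Real.cos θ ≤ b := by nlinarith [Real.cos_le_one θ]
    nlinarith
  set H : ℝ → ℝ := fun θ => (θ + 2 * Real.arctan (b * Real.sin θ / (m + r - b * Real.cos θ))) / r
    with hH
  have hderiv : ∀ θ ∈ Set.uIcc (0:ℝ) π, HasDerivAt H (1 / (m - b * Real.cos θ)) θ := by
    intro θ _
    have hDθ := hD θ
    have h1 : HasDerivAt (fun θ : ℝ => b * Real.sin θ) (b * Real.cos θ) θ := by
      simpa using (Real.hasDerivAt_sin θ).const_mul b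
    have h2 : HasDerivAt (fun θ : ℝ => m + r - b * Real.cos θ) (b * Real.sin θ) θ := by
      have := ((Real.hasDerivAt_cos θ).const_mul b).const_sub (m + r)
      simpa using this
    have h3 := (h1.div h2 (ne_of_gt hDθ))
    have h4 := h3.arctan
    have h5 := ((hasDerivAt_id θ).add (h4.const_mul 2)).div_const r
    refine h5.congr_deriv ?_
    symm
    simp only [Pi.div_apply]
    have hsc := Real.sin_sq_add_cos_sq θ
    have hkey : 1 + (b * Real.sin θ / (m + r - b * Real.cos θ))^2
        = 2*(m+r)*(m - b*Real.cos θ)/(m + r - b * Real.cos θ)^2 := by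
      field_simp
      linear_combination hr2 + b^2*hsc
    have hclaim : b * Real.cos θ * (m + r - b * Real.cos θ) - b * Real.sin θ * (b * Real.sin θ)
        = b * Real.cos θ * (m + r) - b^2 := by
      linear_combination (-(b^2)) * hsc
    rw [hkey, hclaim]
    have hE := hDen θ
    have hmr : (0:ℝ) < m + r := by linarith
    field_simp
    linear_combination hr2
  have hcont : ContinuousOn (fun θ => 1 / (m - b * Real.cos θ)) (Set.uIcc (0:ℝ) π) :=
    ContinuousOn.div continuousOn_const
      (Continuous.continuousOn (by continuity))
      (fun x _ => ne_of_gt (hDen x))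
  rw [intervalIntegral.integral_eq_sub_of_hasDerivAt hderiv hcont.intervalIntegrable]
  simp [hH, Real.sin_pi, Real.cos_pi, Real.sin_zero, Real.cos_zero, Real.arctan_zero]

lemma cos_lt_one_on (θ : ℝ) (hθ : θ ∈ Set.Ioc 0 π) : Real.cos θ < 1 := by
  have := Real.strictAntiOn_cos (Set.mem_Icc.2 ⟨le_refl 0, Real.pi_nonneg⟩)
    (Set.mem_Icc.2 ⟨hθ.1.le, hθ.2⟩) hθ.1
  simpa using this

lemma sinsq_integrable (m b : ℝ) (hb : 0 < b) (hbm : b ≤ m) :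
    IntervalIntegrable (fun θ => b^2 * Real.sin θ^2 / (m - b * Real.cos θ)) volume 0 π := by
  rcases eq_or_lt_of_le hbm with h | h
  · -- b = m
    subst h
    rw [intervalIntegrable_iff_integrableOn_Ioc_of_le Real.pi_nonneg]
    have hcont : IntegrableOn (fun θ => b * (1 + Real.cos θ)) (Set.Ioc 0 π) volume :=
      (Continuous.integrableOn_Ioc (by continuity))
    refine hcont.congr_fun ?_ measurableSet_Ioc
    intro θ hθ
    have h1 : Real.cos θ < 1 := cos_lt_one_on θ hθ
    have h2 : b - b * Real.cos θ > 0 := by nlinarith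
    have hsc := Real.sin_sq_add_cos_sq θ
    rw [eq_div_iff h2.ne']
    linear_combination (-(b^2)) * hsc
  · -- b < m
    have hDen : ∀ θ : ℝ, 0 < m - b * Real.cos θ := by
      intro θ
      have h1 : b * Real.cos θ ≤ b := by nlinarith [Real.cos_le_one θ]
      nlinarith
    exact (ContinuousOn.div (by fun_prop) (by fun_prop)
      (fun x _ => ne_of_gt (hDen x))).intervalIntegrable

lemma sinsq_int (m b : ℝ) (hb : 0 < b) (hbm : b ≤ m) :
    ∫ θ in (0:ℝ)..π, b^2 * Real.sin θ^2 / (m - b * Real.cos θ)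
      = π * (m - Real.sqrt (m^2 - b^2)) := by
  rcases eq_or_lt_of_le hbm with h | h
  · subst h
    have heq : Set.EqOn (fun θ => b^2 * Real.sin θ^2 / (b - b * Real.cos θ))
        (fun θ => b * (1 + Real.cos θ)) (Set.Ioc 0 π) := by
      intro θ hθ
      have h1 : Real.cos θ < 1 := cos_lt_one_on θ hθ
      have h2 : b - b * Real.cos θ > 0 := by nlinarith
      have hsc := Real.sin_sq_add_cos_sq θ
      rw [div_eq_iff h2.ne']
      linear_combination (b^2) * hsc
    rw [intervalIntegral.integral_of_le Real.pi_nonneg,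
      MeasureTheory.setIntegral_congr_fun measurableSet_Ioc heq,
      ← intervalIntegral.integral_of_le Real.pi_nonneg]
    have : ∫ θ in (0:ℝ)..π, b * (1 + Real.cos θ)
        = b * ((π - 0) + (Real.sin π - Real.sin 0)) := by
      rw [intervalIntegral.integral_const_mul, intervalIntegral.integral_add
        intervalIntegrable_const (Continuous.intervalIntegrable (by continuity) 0 π),
        intervalIntegral.integral_const, integral_cos]
      simp
    rw [this]
    simp [Real.sin_pi]
    ring
  · have hDen : ∀ θ : ℝ, 0 < m - b * Real.cos θ := by
      intro θ
      have h1 : b * Real.cos θ ≤ b := by nlinarith [Real.cos_le_one θ]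
      nlinarith
    have heq : ∀ θ : ℝ, b^2 * Real.sin θ^2 / (m - b * Real.cos θ)
        = (b * Real.cos θ + m) - (m^2 - b^2) * (1 / (m - b * Real.cos θ)) := by
      intro θ
      have h2 := hDen θ
      have hsc := Real.sin_sq_add_cos_sq θ
      field_simp
      linear_combination b^2 * hsc
    simp only [heq]
    have hi1 : IntervalIntegrable (fun θ => b * Real.cos θ + m) volume 0 π :=
      (Continuous.intervalIntegrable (by continuity) 0 π)
    have hi2 : IntervalIntegrable (fun θ => (m^2 - b^2) * (1 / (m - b * Real.cos θ))) volume 0 π := by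
      apply Continuous.intervalIntegrable
      apply Continuous.mul continuous_const
      exact (continuous_const.div (by continuity) (fun x => ne_of_gt (hDen x)))
    rw [intervalIntegral.integral_sub hi1 hi2, intervalIntegral.integral_const_mul,
      poisson_int m b hb h,
      intervalIntegral.integral_add (Continuous.intervalIntegrable (by continuity) 0 π)
        intervalIntegrable_const,
      intervalIntegral.integral_const_mul, integral_cos,
      intervalIntegral.integral_const]
    have hr2 : Real.sqrt (m^2-b^2)^2 = m^2 - b^2 := Real.sq_sqrt (by nlinarith)
    have hrpos : 0 < Real.sqrt (m^2 - b^2) := Real.sqrt_pos.2 (by nlinarith)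
    simp only [Real.sin_pi, Real.sin_zero]
    field_simp
    linear_combination π * hr2

lemma sinsq_integrable' (m b : ℝ) (hb : 0 < b) (hbm : b ≤ m) :
    IntervalIntegrable (fun θ => b^2 * Real.sin θ^2 / (m + b * Real.cos θ)) volume 0 π := by
  have h := ((sinsq_integrable m b hb hbm).comp_sub_left π).symm
  simp only [sub_zero, sub_self] at h
  have heq : (fun θ => b^2 * Real.sin θ^2 / (m + b * Real.cos θ))
      = fun x => b^2 * Real.sin (π - x)^2 / (m - b * Real.cos (π - x)) := by
    funext x
    rw [Real.sin_pi_sub, Real.cos_pi_sub]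
    ring_nf
  rw [heq]
  exact h

lemma sinsq_int' (m b : ℝ) (hb : 0 < b) (hbm : b ≤ m) :
    ∫ θ in (0:ℝ)..π, b^2 * Real.sin θ^2 / (m + b * Real.cos θ)
      = π * (m - Real.sqrt (m^2 - b^2)) := by
  have heq : (fun θ => b^2 * Real.sin θ^2 / (m + b * Real.cos θ))
      = fun x => b^2 * Real.sin (π - x)^2 / (m - b * Real.cos (π - x)) := by
    funext x
    rw [Real.sin_pi_sub, Real.cos_pi_sub]
    ring_nf
  rw [heq, intervalIntegral.integral_comp_sub_left
    (fun x => b^2 * Real.sin x^2 / (m - b * Real.cos x)) π]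
  simp only [sub_self, sub_zero]
  exact sinsq_int m b hb hbm

section Cov
variable (a b c : ℝ)

lemma cov (hb : 0 < b) (hbc : b ≤ c) (hcb1 : c + b ≤ 1) (ha2 : a^2 = c^2 - b^2)
    (ρ : ℝ → ℝ)
    (hρ : ∀ x : ℝ, ρ x =
      (1 / Real.pi) * Real.sqrt (-a ^ 2 + 2 * c * (x - 1) ^ 2 - (x - 1) ^ 4) /
        |x * (x - 1) * (x - 2)|)
    (ε : ℝ) (hε : ε = 1 ∨ ε = -1) :
    IntegrableOn ρ ((fun θ => 1 + ε * Real.sqrt (c - b * Real.cos θ)) '' (Set.Ioo 0 π)) volume ∧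
    ∫ x in ((fun θ => 1 + ε * Real.sqrt (c - b * Real.cos θ)) '' (Set.Ioo 0 π)), ρ x
      = (1/2) * ((c - Real.sqrt (c^2 - b^2)) + ((1 - c) - Real.sqrt ((1-c)^2 - b^2))) := by
  have hc : 0 < c := lt_of_lt_of_le hb hbc
  have hεsq : ε^2 = 1 := by rcases hε with h | h <;> rw [h] <;> norm_num
  have hεabs : |ε| = 1 := by rcases hε with h | h <;> rw [h] <;> norm_num
  have hεne : ε ≠ 0 := by rcases hε with h | h <;> rw [h] <;> norm_num
  set f : ℝ → ℝ := fun θ => 1 + ε * Real.sqrt (c - b * Real.cos θ) with hf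
  set f' : ℝ → ℝ := fun θ => ε * (b * Real.sin θ / (2 * Real.sqrt (c - b * Real.cos θ))) with hf'
  have hmem : ∀ θ ∈ Set.Ioo (0:ℝ) π, 0 < c - b * Real.cos θ ∧ c - b * Real.cos θ < c + b := by
    intro θ hθ
    have h1 : Real.cos θ < 1 := cos_lt_one_on θ ⟨hθ.1, hθ.2.le⟩
    have h2 : -1 < Real.cos θ := by
      have := Real.strictAntiOn_cos (Set.mem_Icc.2 ⟨hθ.1.le, hθ.2.le⟩)
        (Set.mem_Icc.2 ⟨Real.pi_nonneg, le_refl π⟩) hθ.2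
      simpa [Real.cos_pi] using this
    constructor <;> nlinarith
  have hderiv : ∀ θ ∈ Set.Ioo (0:ℝ) π, HasDerivWithinAt f (f' θ) (Set.Ioo 0 π) θ := by
    intro θ hθ
    have hpos := (hmem θ hθ).1
    have hinner : HasDerivAt (fun θ : ℝ => c - b * Real.cos θ) (b * Real.sin θ) θ := by
      have := ((Real.hasDerivAt_cos θ).const_mul b).const_sub c
      simpa using this
    have hsq := hinner.sqrt (ne_of_gt hpos)
    have := ((hsq.const_mul ε).const_add 1)
    refine HasDerivAt.hasDerivWithinAt ?_
    convert this using 1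
  have hinj : Set.InjOn f (Set.Ioo 0 π) := by
    intro θ₁ h₁ θ₂ h₂ heq
    have e1 : Real.sqrt (c - b * Real.cos θ₁) = Real.sqrt (c - b * Real.cos θ₂) := by
      have : ε * Real.sqrt (c - b * Real.cos θ₁) = ε * Real.sqrt (c - b * Real.cos θ₂) := by
        simpa [hf] using heq
      exact mul_left_cancel₀ hεne this
    have e2 : c - b * Real.cos θ₁ = c - b * Real.cos θ₂ :=
      (Real.sqrt_inj (hmem θ₁ h₁).1.le (hmem θ₂ h₂).1.le).1 e1
    have e3 : Real.cos θ₁ = Real.cos θ₂ := by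
      have h4 : b * Real.cos θ₁ = b * Real.cos θ₂ := by linarith
      exact mul_left_cancel₀ hb.ne' h4
    exact Real.injOn_cos (Set.mem_Icc.2 ⟨h₁.1.le, h₁.2.le⟩)
      (Set.mem_Icc.2 ⟨h₂.1.le, h₂.2.le⟩) e3
  -- pointwise identity on Ioo 0 π
  have hpt : ∀ θ ∈ Set.Ioo (0:ℝ) π, |f' θ| • ρ (f θ)
      = (1/(2*π)) * (b^2 * Real.sin θ^2 / (c - b * Real.cos θ)
          + b^2 * Real.sin θ^2 / ((1-c) + b * Real.cos θ)) := by
    intro θ hθ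
    obtain ⟨ht0, ht1⟩ := hmem θ hθ
    set t := c - b * Real.cos θ with htdef
    have htlt1 : t < 1 := by linarith
    set s := Real.sqrt t with hsdef
    have hs0 : 0 < s := Real.sqrt_pos.2 ht0
    have hs2 : s^2 = t := Real.sq_sqrt ht0.le
    have hs1 : s < 1 := by nlinarith
    have hsin : 0 < Real.sin θ := Real.sin_pos_of_pos_of_lt_pi hθ.1 hθ.2
    have harg : -a^2 + 2*c*((f θ) - 1)^2 - ((f θ) - 1)^4 = (b * Real.sin θ)^2 := by
      have h1 : (f θ) - 1 = ε * s := by simp [hf, hsdef, htdef]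
      rw [h1]
      have hsc := Real.sin_sq_add_cos_sq θ
      have : (ε*s)^2 = t := by rw [mul_pow, hεsq, one_mul, hs2]
      rw [show (ε*s)^4 = ((ε*s)^2)^2 from by ring, this, ha2, htdef]
      linear_combination (-(b^2)) * hsc
    have hsqrt_arg : Real.sqrt (-a^2 + 2*c*((f θ) - 1)^2 - ((f θ) - 1)^4) = b * Real.sin θ := by
      rw [harg, Real.sqrt_sq (by positivity)]
    have habs : |f θ * (f θ - 1) * (f θ - 2)| = s * (1 - s^2) := by
      have h1 : f θ * (f θ - 1) * (f θ - 2) = ε * s * (s^2 - 1) := by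
        simp only [hf]
        rw [← htdef, ← hsdef]
        linear_combination (ε*s^3) * hεsq
      rw [h1, abs_mul, abs_mul, hεabs, abs_of_pos hs0, abs_of_neg (by nlinarith : s^2 - 1 < 0)]
      ring
    have habsf' : |f' θ| = b * Real.sin θ / (2 * s) := by
      rw [hf']
      rw [abs_mul, hεabs, one_mul, abs_of_pos (by positivity)]
    rw [smul_eq_mul, habsf', hρ, hsqrt_arg, habs]
    have h1t : (1-c) + b * Real.cos θ = 1 - t := by rw [htdef]; ring
    rw [h1t, ← hs2]
    have hpi := Real.pi_pos
    have hne1 : (1:ℝ) - s^2 ≠ 0 := by nlinarith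
    field_simp
    ring
  have hb1c : b ≤ 1 - c := by linarith
  have hA : IntegrableOn (fun θ => b^2 * Real.sin θ^2 / (c - b*Real.cos θ))
      (Set.Ioo 0 π) volume :=
    ((intervalIntegrable_iff_integrableOn_Ioc_of_le Real.pi_nonneg).1
      (sinsq_integrable c b hb hbc)).mono_set Set.Ioo_subset_Ioc_self
  have hB : IntegrableOn (fun θ => b^2 * Real.sin θ^2 / ((1-c) + b*Real.cos θ))
      (Set.Ioo 0 π) volume :=
    ((intervalIntegrable_iff_integrableOn_Ioc_of_le Real.pi_nonneg).1
      (sinsq_integrable' (1-c) b hb hb1c)).mono_set Set.Ioo_subset_Ioc_self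
  have hInt2 : IntegrableOn (fun θ => (1/(2*π)) * (b^2 * Real.sin θ^2 / (c - b*Real.cos θ)
      + b^2 * Real.sin θ^2 / ((1-c) + b*Real.cos θ))) (Set.Ioo 0 π) volume :=
    (hA.add hB).const_mul _
  have hIntUgly : IntegrableOn (fun θ => |f' θ| • ρ (f θ)) (Set.Ioo 0 π) volume :=
    hInt2.congr_fun (fun θ hθ => (hpt θ hθ).symm) measurableSet_Ioo
  constructor
  · exact (integrableOn_image_iff_integrableOn_abs_deriv_smul measurableSet_Ioo
      hderiv hinj ρ).2 hIntUgly
  · rw [integral_image_eq_integral_abs_deriv_smul measurableSet_Ioo hderiv hinj ρ,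
      MeasureTheory.setIntegral_congr_fun measurableSet_Ioo hpt,
      ← MeasureTheory.integral_Ioc_eq_integral_Ioo,
      ← intervalIntegral.integral_of_le Real.pi_nonneg,
      intervalIntegral.integral_const_mul,
      intervalIntegral.integral_add (sinsq_integrable c b hb hbc)
        (sinsq_integrable' (1-c) b hb hb1c),
      sinsq_int c b hb hbc, sinsq_int' (1-c) b hb hb1c]
    have hpi := Real.pi_pos
    field_simp

end Cov

lemma cm_nonneg (b c : ℝ) (hb : 0 < b) (hbc : b ≤ c) (θ : ℝ) : 0 ≤ c - b * Real.cos θ := by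
  nlinarith [Real.cos_le_one θ, Real.neg_one_le_cos θ]

lemma inner_strictMono (b c : ℝ) (hb : 0 < b) (hbc : b ≤ c) :
    StrictMonoOn (fun θ => Real.sqrt (c - b * Real.cos θ)) (Set.Icc 0 π) := by
  intro x hx y hy hxy
  have h1 : Real.cos y < Real.cos x := Real.strictAntiOn_cos hx hy hxy
  exact Real.sqrt_lt_sqrt (cm_nonneg b c hb hbc x) (by nlinarith)

lemma image_plus (b c : ℝ) (hb : 0 < b) (hbc : b ≤ c) :
    (fun θ => 1 + Real.sqrt (c - b * Real.cos θ)) '' (Set.Ioo 0 π)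
      = Set.Ioo (1 + Real.sqrt (c - b)) (1 + Real.sqrt (c + b)) := by
  set f : ℝ → ℝ := fun θ => 1 + Real.sqrt (c - b * Real.cos θ) with hf
  have hcont : ContinuousOn f (Set.Icc 0 π) := by
    apply Continuous.continuousOn
    exact continuous_const.add (Real.continuous_sqrt.comp (by continuity))
  have hmono : StrictMonoOn f (Set.Icc 0 π) := fun x hx y hy hxy =>
    add_lt_add_right (inner_strictMono b c hb hbc hx hy hxy) 1
  have hf0 : f 0 = 1 + Real.sqrt (c - b) := by simp [hf]
  have hfπ : f π = 1 + Real.sqrt (c + b) := by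
    simp [hf, Real.cos_pi]
  apply Set.Subset.antisymm
  · rintro x ⟨θ, hθ, rfl⟩
    have h0 : (0:ℝ) ∈ Set.Icc 0 π := Set.mem_Icc.2 ⟨le_refl 0, Real.pi_nonneg⟩
    have hπ : π ∈ Set.Icc (0:ℝ) π := Set.mem_Icc.2 ⟨Real.pi_nonneg, le_refl π⟩
    have hθ' : θ ∈ Set.Icc (0:ℝ) π := Set.mem_Icc.2 ⟨hθ.1.le, hθ.2.le⟩
    exact ⟨hf0 ▸ hmono h0 hθ' hθ.1, hfπ ▸ hmono hθ' hπ hθ.2⟩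
  · rw [← hf0, ← hfπ]
    exact intermediate_value_Ioo Real.pi_nonneg hcont

lemma image_minus (b c : ℝ) (hb : 0 < b) (hbc : b ≤ c) :
    (fun θ => 1 + (-1) * Real.sqrt (c - b * Real.cos θ)) '' (Set.Ioo 0 π)
      = Set.Ioo (1 - Real.sqrt (c + b)) (1 - Real.sqrt (c - b)) := by
  set f : ℝ → ℝ := fun θ => 1 + (-1) * Real.sqrt (c - b * Real.cos θ) with hf
  have hcont : ContinuousOn f (Set.Icc 0 π) := by
    apply Continuous.continuousOn
    exact continuous_const.add (continuous_const.mul (Real.continuous_sqrt.comp (by continuity)))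
  have hanti : StrictAntiOn f (Set.Icc 0 π) := by
    intro x hx y hy hxy
    have := inner_strictMono b c hb hbc hx hy hxy
    simp only [hf]
    linarith
  have hf0 : f 0 = 1 - Real.sqrt (c - b) := by simp [hf]; ring
  have hfπ : f π = 1 - Real.sqrt (c + b) := by
    simp [hf, Real.cos_pi]
    ring_nf
  apply Set.Subset.antisymm
  · rintro x ⟨θ, hθ, rfl⟩
    have h0 : (0:ℝ) ∈ Set.Icc 0 π := Set.mem_Icc.2 ⟨le_refl 0, Real.pi_nonneg⟩
    have hπ : π ∈ Set.Icc (0:ℝ) π := Set.mem_Icc.2 ⟨Real.pi_nonneg, le_refl π⟩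
    have hθ' : θ ∈ Set.Icc (0:ℝ) π := Set.mem_Icc.2 ⟨hθ.1.le, hθ.2.le⟩
    exact ⟨hfπ ▸ hanti hθ' hπ hθ.2, hf0 ▸ hanti h0 hθ' hθ.1⟩
  · rw [← hf0, ← hfπ]
    exact intermediate_value_Ioo' Real.pi_nonneg hcont


/-- Let `0 < p ≤ q` with `p + q ≤ 1`, `a = q - p`,
`c = q(1-p) + p(1-q)`, `u₋ = √(q(1-p)) - √(p(1-q))`, `u₊ = √(q(1-p)) + √(p(1-q))`,
`I₁ = [1 + u₋, 1 + u₊]`, `I₂ = [1 - u₊, 1 - u₋]`.  Then the density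
`ρ(x) = (1/π) √(-a² + 2c(x-1)² - (x-1)⁴) / |x(x-1)(x-2)|` of the absolutely continuous
part of the limiting eigenvalue distribution of the sum of two independent random
projections of fractional ranks `p` and `q` has total mass `∫_{I₁ ∪ I₂} ρ = 2p`. -/
theorem density_total_mass_eq_two_p
    (p q : ℝ) (hp : 0 < p) (hpq : p ≤ q) (hpq1 : p + q ≤ 1)
    (a c uminus uplus : ℝ)
    (ha : a = q - p) (hc : c = q * (1 - p) + p * (1 - q))
    (huminus : uminus = Real.sqrt (q * (1 - p)) - Real.sqrt (p * (1 - q)))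
    (huplus : uplus = Real.sqrt (q * (1 - p)) + Real.sqrt (p * (1 - q)))
    (ρ : ℝ → ℝ)
    (hρ : ∀ x : ℝ, ρ x =
      (1 / Real.pi) * Real.sqrt (-a ^ 2 + 2 * c * (x - 1) ^ 2 - (x - 1) ^ 4) /
        |x * (x - 1) * (x - 2)|) :
    ∫ x in (Set.Icc (1 + uminus) (1 + uplus) ∪ Set.Icc (1 - uplus) (1 - uminus)), ρ x =
      2 * p := by

  have hq : 0 < q := lt_of_lt_of_le hp hpq
  have h1p : 0 < 1 - p := by linarith
  have h1q : 0 < 1 - q := by linarith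
  set sp := Real.sqrt (q * (1 - p)) with hsp
  set sm := Real.sqrt (p * (1 - q)) with hsm
  have hsp2 : sp^2 = q * (1-p) := Real.sq_sqrt (by positivity)
  have hsm2 : sm^2 = p * (1-q) := Real.sq_sqrt (by positivity)
  have hsppos : 0 < sp := Real.sqrt_pos.2 (by positivity)
  have hsmpos : 0 < sm := Real.sqrt_pos.2 (by positivity)
  have hsmsp : sm ≤ sp := Real.sqrt_le_sqrt (by nlinarith)
  set b := 2 * sp * sm with hbdef
  have hbpos : 0 < b := by positivity
  have hcmb : c - b = uminus^2 := by
    rw [hc, huminus, hbdef]; linear_combination -hsp2 - hsm2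
  have hcpb : c + b = uplus^2 := by
    rw [hc, huplus, hbdef]; linear_combination -hsp2 - hsm2
  have humnn : 0 ≤ uminus := by rw [huminus]; linarith
  have huppos : 0 < uplus := by rw [huplus]; linarith
  have hbc : b ≤ c := by nlinarith [sq_nonneg uminus]
  have hb2 : b^2 = 4*(q*(1-p))*(p*(1-q)) := by
    rw [hbdef]; linear_combination (4*sm^2)*hsp2 + (4*(q*(1-p)))*hsm2
  set sA := Real.sqrt ((1-p)*(1-q)) with hsA
  set sB := Real.sqrt (p*q) with hsB
  have hsA2 : sA^2 = (1-p)*(1-q) := Real.sq_sqrt (by positivity)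
  have hsB2 : sB^2 = p*q := Real.sq_sqrt (by positivity)
  have hprod : sp * sm = sA * sB := by
    rw [hsp, hsm, hsA, hsB, ← Real.sqrt_mul (by positivity), ← Real.sqrt_mul (by positivity)]
    congr 1
    ring
  have hcb1 : c + b ≤ 1 := by
    have h1 : 1 - c - b = (sA - sB)^2 := by
      rw [hc, hbdef, show 2*sp*sm = 2*(sp*sm) from by ring, hprod]
      linear_combination -hsA2 - hsB2
    nlinarith [sq_nonneg (sA - sB)]
  have ha2 : a^2 = c^2 - b^2 := by rw [ha, hc, hb2]; ring
  have hsqrt1 : Real.sqrt (c^2 - b^2) = a := by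
    rw [← ha2, Real.sqrt_sq (by rw [ha]; linarith)]
  have h1c2 : (1-c)^2 - b^2 = (1-p-q)^2 := by rw [hc, hb2]; ring
  have hsqrt2 : Real.sqrt ((1-c)^2 - b^2) = 1-p-q := by
    rw [h1c2, Real.sqrt_sq (by linarith)]
  have hsqcmb : Real.sqrt (c - b) = uminus := by rw [hcmb, Real.sqrt_sq humnn]
  have hsqcpb : Real.sqrt (c + b) = uplus := by rw [hcpb, Real.sqrt_sq huppos.le]
  obtain ⟨hI1int, hI1⟩ := cov a b c hbpos hbc hcb1 ha2 ρ hρ 1 (Or.inl rfl)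
  obtain ⟨hI2int, hI2⟩ := cov a b c hbpos hbc hcb1 ha2 ρ hρ (-1) (Or.inr rfl)
  have him1 : ((fun θ => 1 + (1:ℝ) * Real.sqrt (c - b * Real.cos θ)) '' (Set.Ioo 0 π))
      = Set.Ioo (1+uminus) (1+uplus) := by
    rw [show (fun θ => 1 + (1:ℝ) * Real.sqrt (c - b * Real.cos θ))
        = (fun θ => 1 + Real.sqrt (c - b * Real.cos θ)) from by funext θ; ring,
      image_plus b c hbpos hbc, hsqcmb, hsqcpb]
  have him2 : ((fun θ => 1 + (-1:ℝ) * Real.sqrt (c - b * Real.cos θ)) '' (Set.Ioo 0 π))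
      = Set.Ioo (1-uplus) (1-uminus) := by
    rw [image_minus b c hbpos hbc, hsqcmb, hsqcpb]
  rw [him1] at hI1int hI1
  rw [him2] at hI2int hI2
  have haeq : ((Set.Icc (1 + uminus) (1 + uplus) ∪ Set.Icc (1 - uplus) (1 - uminus) : Set ℝ))
      =ᵐ[volume] ((Set.Ioo (1 + uminus) (1 + uplus) ∪ Set.Ioo (1 - uplus) (1 - uminus) : Set ℝ)) :=
    (MeasureTheory.ae_eq_set_union MeasureTheory.Ioo_ae_eq_Icc MeasureTheory.Ioo_ae_eq_Icc).symm
  have hdisj : Disjoint (Set.Ioo (1+uminus) (1+uplus)) (Set.Ioo (1-uplus) (1-uminus)) := by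
    rw [Set.disjoint_left]
    intro x hx hx'
    have h1 := hx.1
    have h2 := hx'.2
    linarith
  rw [MeasureTheory.setIntegral_congr_set haeq,
    MeasureTheory.setIntegral_union hdisj measurableSet_Ioo hI1int hI2int,
    hI1, hI2, hsqrt1, hsqrt2, ha]
  ring
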